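/- Let n ≥ 1 be a real number, m ≥ 1 a natural number, and ε > 0. Then there exist pipe resistances k_1, …, k_m > 0 and flow rates q_1 ≥ q_2 ≥ ⋯ ≥ q_m > 0 such that, with q_{m+1} = 0, S_i = k_1 + ⋯ + k_i, and Δh = ∑_{i=1}^{m} k_i · q_i^n, the total discrete operation time t_d = ∑_{i=1}^{m} (q_i − q_{i+1}) · (S_i / Δh)^(1/n) satisfies t_d > m^(1 − 1/n) − ε. -/

import Mathlib

/-- Tightness of the bound `m^(1 - 1/n)`: for every `ε > 0` there are positive
resistances `k_1, …, k_m` and flows `q_1 ≥ ⋯ ≥ q_m > 0` (encoded as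
`k i`, `q i` for `i = 0, …, m-1`, with `q m = 0` encoding `q_{m+1} = 0`)
whose discrete operation time exceeds `m^(1 - 1/n) - ε`. -/
theorem discrete_time_sup (n : ℝ) (hn : 1 ≤ n) (m : ℕ) (hm : 1 ≤ m)
    (ε : ℝ) (hε : 0 < ε) :
    ∃ k q : ℕ → ℝ, (∀ i < m, 0 < k i) ∧ (∀ i < m, 0 < q i) ∧
      (∀ i < m, q (i + 1) ≤ q i) ∧ q m = 0 ∧
      ∑ i ∈ Finset.range m,
          (q i - q (i + 1))
            * ((∑ j ∈ Finset.range (i + 1), k j)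
                / (∑ j ∈ Finset.range m, k j * (q j) ^ n)) ^ (1 / n)
        > (m : ℝ) ^ (1 - 1 / n) - ε := by
  have hn0 : (0:ℝ) < n := lt_of_lt_of_le one_pos hn
  have hm0 : (0:ℝ) < m := by exact_mod_cast hm
  set ρ : ℝ := min (1/2) (ε/(2*m)) with hρdef
  have hρ0 : 0 < ρ := lt_min (by norm_num) (by positivity)
  have hρh : ρ ≤ 1/2 := min_le_left _ _
  have hρ1 : ρ < 1 := lt_of_le_of_lt hρh (by norm_num)
  set P : ℝ := ρ ^ n with hP
  have hP0 : 0 < P := Real.rpow_pos_of_pos hρ0 n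
  have hP1 : P < 1 := Real.rpow_lt_one hρ0.le hρ1 hn0
  set b : ℝ := P⁻¹ with hb
  have hb1 : 1 < b := by
    rw [hb]
    exact one_lt_inv_iff₀.mpr ⟨hP0, hP1⟩
  have hb0 : 0 < b := lt_trans one_pos hb1
  set k : ℕ → ℝ := fun i => if i = 0 then 1 else b ^ i - b ^ (i - 1) with hk
  set q : ℕ → ℝ := fun i => if i < m then ρ ^ i else 0 with hq
  -- partial sums of k
  have hS : ∀ i, ∑ j ∈ Finset.range (i+1), k j = b ^ i := by
    intro i
    induction i with
    | zero => simp [hk]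
    | succ i ih =>
      rw [Finset.sum_range_succ, ih]
      simp only [hk, Nat.succ_ne_zero, if_false, Nat.add_sub_cancel]
      ring
  -- (ρ^j)^n = P^j
  have hqn : ∀ j : ℕ, ((ρ:ℝ) ^ j : ℝ) ^ n = P ^ j := by
    intro j
    rw [← Real.rpow_natCast ρ j, ← Real.rpow_mul hρ0.le, hP,
      ← Real.rpow_natCast (ρ ^ n) j, ← Real.rpow_mul hρ0.le, mul_comm]
  -- (b^i)^(1/n) = (ρ^i)⁻¹
  have hA : ∀ i : ℕ, ((b:ℝ) ^ i : ℝ) ^ (1/n) = (ρ ^ i)⁻¹ := by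
    intro i
    rw [hb, inv_pow, ← hqn i, Real.inv_rpow (by positivity), one_div,
      Real.rpow_rpow_inv (by positivity) (ne_of_gt hn0)]
  have hkpos : ∀ i, 0 < k i := by
    intro i
    rw [hk]
    by_cases h : i = 0
    · simp [h]
    · simp only [h, if_false]
      have : b ^ (i - 1) < b ^ i := by
        apply pow_lt_pow_right₀ hb1
        omega
      linarith
  have hqval : ∀ j < m, q j = ρ ^ j := by
    intro j hj; simp [hq, hj]
  -- Δh bounds
  set Δ : ℝ := ∑ j ∈ Finset.range m, k j * (q j) ^ n with hΔ
  have hterm : ∀ j < m, k j * (q j) ^ n ≤ 1 := by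
    intro j hj
    rw [hqval j hj, hqn j, hk]
    by_cases h : j = 0
    · simp [h]
    · simp only [h, if_false]
      have h1 : b ^ j * P ^ j = 1 := by
        rw [hb, ← mul_pow, inv_mul_cancel₀ (ne_of_gt hP0), one_pow]
      have h2 : b ^ (j-1) * P ^ (j-1) = 1 := by
        rw [hb, ← mul_pow, inv_mul_cancel₀ (ne_of_gt hP0), one_pow]
      have hPj : P ^ j = P ^ (j-1) * P := by
        rw [← pow_succ]; congr 1; omega
      have h3 : (b ^ j - b ^ (j-1)) * P ^ j = 1 - P := by
        rw [sub_mul, h1, hPj, ← mul_assoc, h2, one_mul]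
      linarith [h3, hP0]
  have hΔpos : 0 < Δ := by
    rw [hΔ]
    apply Finset.sum_pos
    · intro j hj
      have hj' := Finset.mem_range.mp hj
      have : (0:ℝ) < (q j) ^ n := by
        rw [hqval j hj']
        exact Real.rpow_pos_of_pos (by positivity) n
      exact mul_pos (hkpos j) this
    · exact ⟨0, Finset.mem_range.mpr hm⟩
  have hΔle : Δ ≤ m := by
    rw [hΔ]
    calc ∑ j ∈ Finset.range m, k j * (q j) ^ n ≤ ∑ j ∈ Finset.range m, (1:ℝ) :=
          Finset.sum_le_sum (fun j hj => hterm j (Finset.mem_range.mp hj))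
      _ = m := by simp
  refine ⟨k, q, fun i _ => hkpos i, ?_, ?_, ?_, ?_⟩
  · intro i hi; rw [hqval i hi]; positivity
  · intro i hi
    rw [hqval i hi, hq]
    by_cases h : i + 1 < m
    · simp only [h, if_true]
      exact pow_le_pow_of_le_one hρ0.le hρ1.le (Nat.le_succ i)
    · simp only [h, if_false]
      positivity
  · simp [hq]
  · -- main estimate
    have hmain : ∀ i ∈ Finset.range m,
        (1 - ρ) / (m:ℝ) ^ (1/n) ≤
        (q i - q (i + 1)) * ((∑ j ∈ Finset.range (i + 1), k j) / Δ) ^ (1/n) := by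
      intro i hi
      have hi' := Finset.mem_range.mp hi
      rw [hS i]
      have hd : (q i - q (i+1)) * (ρ ^ i)⁻¹ ≥ 1 - ρ := by
        rw [hqval i hi', hq]
        by_cases h : i + 1 < m
        · simp only [h, if_true]
          have hne : (ρ:ℝ) ^ i ≠ 0 := by positivity
          have : (ρ ^ i - ρ ^ (i+1)) * (ρ ^ i)⁻¹ = 1 - ρ := by
            rw [pow_succ]
            field_simp
          linarith [this.ge]
        · simp only [h, if_false]
          have hne : (ρ:ℝ) ^ i ≠ 0 := by positivity
          have : (ρ ^ i - 0) * (ρ ^ i)⁻¹ = 1 := by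
            field_simp
            ring
          rw [this]
          linarith
      have hdiff0 : 0 ≤ q i - q (i+1) := by
        have := hd
        nlinarith [inv_pos.mpr (pow_pos hρ0 i), sub_nonneg.mpr hρ1.le,
          pow_pos hρ0 i]
      have hfrac : (b ^ i) / (m:ℝ) ≤ (b ^ i) / Δ :=
        div_le_div_of_nonneg_left (by positivity) hΔpos hΔle
      have hrp : ((b ^ i) / (m:ℝ)) ^ (1/n) ≤ ((b ^ i) / Δ) ^ (1/n) :=
        Real.rpow_le_rpow (by positivity) hfrac (by positivity)
      have hval : ((b ^ i) / (m:ℝ)) ^ (1/n) = (ρ ^ i)⁻¹ / (m:ℝ) ^ (1/n) := by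
        rw [Real.div_rpow (by positivity) hm0.le, hA i]
      calc (1 - ρ) / (m:ℝ) ^ (1/n)
          ≤ ((q i - q (i+1)) * (ρ ^ i)⁻¹) / (m:ℝ) ^ (1/n) := by
            apply div_le_div_of_nonneg_right ?_ ((Real.rpow_pos_of_pos hm0 (1/n)).le)
            · linarith
        _ = (q i - q (i+1)) * ((ρ ^ i)⁻¹ / (m:ℝ) ^ (1/n)) := by ring
        _ = (q i - q (i+1)) * ((b ^ i) / (m:ℝ)) ^ (1/n) := by rw [hval]
        _ ≤ (q i - q (i+1)) * ((b ^ i) / Δ) ^ (1/n) :=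
            mul_le_mul_of_nonneg_left hrp hdiff0
    have hsum : (m:ℝ) * ((1 - ρ) / (m:ℝ) ^ (1/n)) ≤
        ∑ i ∈ Finset.range m,
          (q i - q (i + 1))
            * ((∑ j ∈ Finset.range (i + 1), k j) / Δ) ^ (1/n) := by
      calc (m:ℝ) * ((1 - ρ) / (m:ℝ) ^ (1/n))
          = ∑ _i ∈ Finset.range m, (1 - ρ) / (m:ℝ) ^ (1/n) := by
            rw [Finset.sum_const, Finset.card_range, nsmul_eq_mul]
        _ ≤ _ := Finset.sum_le_sum hmain
    -- convert m * ((1-ρ)/m^(1/n)) to m^(1-1/n) * (1-ρ)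
    have hrw : (m:ℝ) * ((1 - ρ) / (m:ℝ) ^ (1/n)) = (m:ℝ) ^ (1 - 1/n) * (1 - ρ) := by
      rw [Real.rpow_sub hm0, Real.rpow_one]
      ring
    have hmle : (m:ℝ) ^ (1 - 1/n) ≤ m := by
      calc (m:ℝ) ^ (1 - 1/n) ≤ (m:ℝ) ^ (1:ℝ) := by
            apply Real.rpow_le_rpow_of_exponent_le (by exact_mod_cast hm)
            have : 0 ≤ 1/n := by positivity
            linarith
        _ = m := Real.rpow_one _
      
    have hρε : (m:ℝ) * ρ ≤ ε / 2 := by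
      have h1 : ρ ≤ ε / (2*m) := min_le_right _ _
      calc (m:ℝ) * ρ ≤ (m:ℝ) * (ε / (2*m)) := by
            exact mul_le_mul_of_nonneg_left h1 hm0.le
        _ = ε / 2 := by field_simp
    have hfin : (m:ℝ) ^ (1 - 1/n) * (1 - ρ) > (m:ℝ) ^ (1 - 1/n) - ε := by
      have h1 : (m:ℝ) ^ (1 - 1/n) * ρ ≤ (m:ℝ) * ρ :=
        mul_le_mul_of_nonneg_right hmle hρ0.le
      nlinarith
    rw [hΔ] at hsum
    calc (m:ℝ) ^ (1 - 1/n) - ε < (m:ℝ) ^ (1 - 1/n) * (1 - ρ) := hfin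
      _ = (m:ℝ) * ((1 - ρ) / (m:ℝ) ^ (1/n)) := hrw.symm
      _ ≤ _ := hsum
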